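/- If the 3-SAT instance is satisfiable, then the dual function is nonpositive: for every φ_λ ∈ ℝ^M, inf_{φ ∈ ℝ^N} L_T(φ, φ_λ) ≤ 0. -/
import Mathlib


/-- Complex clause energy Z_1 for the clause X ∨ Y ∨ Z (no negated literal). -/
noncomputable def Zclause1 (x y z : ℝ) : ℂ :=
  1
    + Complex.exp (Complex.I * ((x : ℂ) - (y : ℂ)))
    + Complex.exp (Complex.I * ((x : ℂ) - (z : ℂ)))
    + Complex.exp (Complex.I * ((z : ℂ) - (y : ℂ)))
    - Complex.exp (Complex.I * (x : ℂ))
    - Complex.exp (Complex.I * (y : ℂ))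
    - Complex.exp (Complex.I * (z : ℂ))
    - Complex.exp (Complex.I * ((x : ℂ) - (y : ℂ) + (z : ℂ)))

/-- Complex clause energy Z_2 for the clause ¬X ∨ Y ∨ Z (one negated literal). -/
noncomputable def Zclause2 (x y z : ℝ) : ℂ :=
  1
    - Complex.exp (Complex.I * ((x : ℂ) - (y : ℂ)))
    - Complex.exp (Complex.I * ((x : ℂ) - (z : ℂ)))
    + Complex.exp (Complex.I * ((z : ℂ) - (y : ℂ)))
    + Complex.exp (Complex.I * (x : ℂ))
    - Complex.exp (Complex.I * (y : ℂ))
    - Complex.exp (Complex.I * (z : ℂ))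
    + Complex.exp (Complex.I * ((x : ℂ) - (y : ℂ) + (z : ℂ)))

/-- Complex clause energy Z_3 for the clause ¬X ∨ ¬Y ∨ Z (two negated literals). -/
noncomputable def Zclause3 (x y z : ℝ) : ℂ :=
  1
    + Complex.exp (Complex.I * ((x : ℂ) - (y : ℂ)))
    - Complex.exp (Complex.I * ((x : ℂ) - (z : ℂ)))
    - Complex.exp (Complex.I * ((z : ℂ) - (y : ℂ)))
    + Complex.exp (Complex.I * (x : ℂ))
    + Complex.exp (Complex.I * (y : ℂ))
    - Complex.exp (Complex.I * (z : ℂ))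
    - Complex.exp (Complex.I * ((x : ℂ) - (y : ℂ) + (z : ℂ)))

/-- Complex clause energy Z_4 for the clause ¬X ∨ ¬Y ∨ ¬Z (three negated literals). -/
noncomputable def Zclause4 (x y z : ℝ) : ℂ :=
  1
    + Complex.exp (Complex.I * ((x : ℂ) - (y : ℂ)))
    + Complex.exp (Complex.I * ((x : ℂ) - (z : ℂ)))
    + Complex.exp (Complex.I * ((z : ℂ) - (y : ℂ)))
    + Complex.exp (Complex.I * (x : ℂ))
    + Complex.exp (Complex.I * (y : ℂ))
    + Complex.exp (Complex.I * (z : ℂ))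
    + Complex.exp (Complex.I * ((x : ℂ) - (y : ℂ) + (z : ℂ)))

/-- The clause-type energy Z_t, indexed by the number of negated literals:
`ZclauseType 0 = Z_1`, `ZclauseType 1 = Z_2`, `ZclauseType 2 = Z_3`, `ZclauseType 3 = Z_4`. -/
noncomputable def ZclauseType (t : Fin 4) : ℝ → ℝ → ℝ → ℂ :=
  ![Zclause1, Zclause2, Zclause3, Zclause4] t

/-- A 3-SAT clause on `N` variables: three literals on three distinct variables,
listed with the negated literals first, so that `var k` is the variable of the k-th
literal, which is negated iff `k < negCount`, and `negCount` is the number of negated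
literals of the clause. -/
structure Clause3 (N : ℕ) where
  var : Fin 3 → Fin N
  negCount : Fin 4
  distinct : Function.Injective var

/-- The clause energy Z_m(φ) of a clause: the formula Z_t for the type t matching its
number of negated literals (negated literals coming first), applied to the phases of
its three variables. -/
noncomputable def Zm {N : ℕ} (c : Clause3 N) (phi : Fin N → ℝ) : ℂ :=
  ZclauseType c.negCount (phi (c.var 0)) (phi (c.var 1)) (phi (c.var 2))

/-- The total Lagrange function
L_T(φ, φ_λ) = ∑_m [cos φ_λ^m · Re Z_m(φ) + sin φ_λ^m · Im Z_m(φ)]. -/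
noncomputable def LagT {N M : ℕ} (C : Fin M → Clause3 N) (phi : Fin N → ℝ)
    (lam : Fin M → ℝ) : ℝ :=
  ∑ m : Fin M, (Real.cos (lam m) * (Zm (C m) phi).re + Real.sin (lam m) * (Zm (C m) phi).im)

/-- An assignment S ∈ {−1,1}^N satisfies a clause if at least one of its literals is
true: S_v = −1 for a negated literal on variable v, S_v = 1 for a positive one. -/
def ClauseSat {N : ℕ} (c : Clause3 N) (S : Fin N → ℝ) : Prop :=
  ∃ k : Fin 3, S (c.var k) = (if (k : ℕ) < (c.negCount : ℕ) then -1 else 1)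

/-- A 3-SAT instance is satisfiable if some assignment S ∈ {−1,1}^N satisfies all clauses. -/
def Satisfiable {N M : ℕ} (C : Fin M → Clause3 N) : Prop :=
  ∃ S : Fin N → ℝ, (∀ j, S j = 1 ∨ S j = -1) ∧ ∀ m : Fin M, ClauseSat (C m) S


open Complex in
lemma exp_phase (s : ℝ) (h : s = 1 ∨ s = -1) :
    Complex.exp (Complex.I * ((if s = 1 then (0:ℝ) else Real.pi) : ℝ)) = (s : ℂ) := by
  rcases h with h | h <;> subst h
  · norm_num
  · norm_num; rw [mul_comm]; exact Complex.exp_pi_mul_I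

open Complex in
lemma fact1 (x y z : ℝ) (hy : Complex.exp (Complex.I * y) * Complex.exp (Complex.I * y) = 1)
    (hz : Complex.exp (Complex.I * z) * Complex.exp (Complex.I * z) = 1) :
    Zclause1 x y z =
      (1 - Complex.exp (Complex.I * x)) * (1 - Complex.exp (Complex.I * y)) *
        (1 - Complex.exp (Complex.I * z)) := by
  have ey : Complex.exp (-(Complex.I * y)) = Complex.exp (Complex.I * y) := by
    rw [Complex.exp_neg, inv_eq_of_mul_eq_one_right hy]
  unfold Zclause1
  have h1 : Complex.I * ((x : ℂ) - y) = Complex.I * x + (-(Complex.I * y)) := by ring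
  have h2 : Complex.I * ((x : ℂ) - z) = Complex.I * x + (-(Complex.I * z)) := by ring
  have h3 : Complex.I * ((z : ℂ) - y) = Complex.I * z + (-(Complex.I * y)) := by ring
  have h4 : Complex.I * ((x : ℂ) - y + z) = Complex.I * x + (-(Complex.I * y)) + Complex.I * z := by ring
  rw [h1, h2, h3, h4, Complex.exp_add, Complex.exp_add, Complex.exp_add, Complex.exp_add,
    Complex.exp_add, ey, Complex.exp_neg, inv_eq_of_mul_eq_one_right hz]
  ring

open Complex in
lemma fact2 (x y z : ℝ) (hy : Complex.exp (Complex.I * y) * Complex.exp (Complex.I * y) = 1)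
    (hz : Complex.exp (Complex.I * z) * Complex.exp (Complex.I * z) = 1) :
    Zclause2 x y z =
      (1 + Complex.exp (Complex.I * x)) * (1 - Complex.exp (Complex.I * y)) *
        (1 - Complex.exp (Complex.I * z)) := by
  have ey : Complex.exp (-(Complex.I * y)) = Complex.exp (Complex.I * y) := by
    rw [Complex.exp_neg, inv_eq_of_mul_eq_one_right hy]
  unfold Zclause2
  have h1 : Complex.I * ((x : ℂ) - y) = Complex.I * x + (-(Complex.I * y)) := by ring
  have h2 : Complex.I * ((x : ℂ) - z) = Complex.I * x + (-(Complex.I * z)) := by ring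
  have h3 : Complex.I * ((z : ℂ) - y) = Complex.I * z + (-(Complex.I * y)) := by ring
  have h4 : Complex.I * ((x : ℂ) - y + z) = Complex.I * x + (-(Complex.I * y)) + Complex.I * z := by ring
  rw [h1, h2, h3, h4, Complex.exp_add, Complex.exp_add, Complex.exp_add, Complex.exp_add,
    Complex.exp_add, ey, Complex.exp_neg, inv_eq_of_mul_eq_one_right hz]
  ring

open Complex in
lemma fact3 (x y z : ℝ) (hy : Complex.exp (Complex.I * y) * Complex.exp (Complex.I * y) = 1)
    (hz : Complex.exp (Complex.I * z) * Complex.exp (Complex.I * z) = 1) :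
    Zclause3 x y z =
      (1 + Complex.exp (Complex.I * x)) * (1 + Complex.exp (Complex.I * y)) *
        (1 - Complex.exp (Complex.I * z)) := by
  have ey : Complex.exp (-(Complex.I * y)) = Complex.exp (Complex.I * y) := by
    rw [Complex.exp_neg, inv_eq_of_mul_eq_one_right hy]
  unfold Zclause3
  have h1 : Complex.I * ((x : ℂ) - y) = Complex.I * x + (-(Complex.I * y)) := by ring
  have h2 : Complex.I * ((x : ℂ) - z) = Complex.I * x + (-(Complex.I * z)) := by ring
  have h3 : Complex.I * ((z : ℂ) - y) = Complex.I * z + (-(Complex.I * y)) := by ring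
  have h4 : Complex.I * ((x : ℂ) - y + z) = Complex.I * x + (-(Complex.I * y)) + Complex.I * z := by ring
  rw [h1, h2, h3, h4, Complex.exp_add, Complex.exp_add, Complex.exp_add, Complex.exp_add,
    Complex.exp_add, ey, Complex.exp_neg, inv_eq_of_mul_eq_one_right hz]
  ring

open Complex in
lemma fact4 (x y z : ℝ) (hy : Complex.exp (Complex.I * y) * Complex.exp (Complex.I * y) = 1)
    (hz : Complex.exp (Complex.I * z) * Complex.exp (Complex.I * z) = 1) :
    Zclause4 x y z =
      (1 + Complex.exp (Complex.I * x)) * (1 + Complex.exp (Complex.I * y)) *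
        (1 + Complex.exp (Complex.I * z)) := by
  have ey : Complex.exp (-(Complex.I * y)) = Complex.exp (Complex.I * y) := by
    rw [Complex.exp_neg, inv_eq_of_mul_eq_one_right hy]
  unfold Zclause4
  have h1 : Complex.I * ((x : ℂ) - y) = Complex.I * x + (-(Complex.I * y)) := by ring
  have h2 : Complex.I * ((x : ℂ) - z) = Complex.I * x + (-(Complex.I * z)) := by ring
  have h3 : Complex.I * ((z : ℂ) - y) = Complex.I * z + (-(Complex.I * y)) := by ring
  have h4 : Complex.I * ((x : ℂ) - y + z) = Complex.I * x + (-(Complex.I * y)) + Complex.I * z := by ring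
  rw [h1, h2, h3, h4, Complex.exp_add, Complex.exp_add, Complex.exp_add, Complex.exp_add,
    Complex.exp_add, ey, Complex.exp_neg, inv_eq_of_mul_eq_one_right hz]
  ring

lemma Zm_eq_zero {N : ℕ} (c : Clause3 N) (S : Fin N → ℝ)
    (hS : ∀ j, S j = 1 ∨ S j = -1) (hc : ClauseSat c S) :
    Zm c (fun j => if S j = 1 then (0:ℝ) else Real.pi) = 0 := by
  set phi : Fin N → ℝ := fun j => if S j = 1 then (0:ℝ) else Real.pi with hphi
  have key : ∀ j, Complex.exp (Complex.I * (phi j)) = (S j : ℂ) := fun j =>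
    exp_phase (S j) (hS j)
  have sq : ∀ j, Complex.exp (Complex.I * (phi j)) * Complex.exp (Complex.I * (phi j)) = 1 := by
    intro j
    rw [key]
    rcases hS j with h | h <;> rw [h] <;> norm_num
  obtain ⟨k, hk⟩ := hc
  obtain ⟨v, t, hd⟩ := c
  simp only [Zm] at *
  have e0 := key (v 0)
  have e1 := key (v 1)
  have e2 := key (v 2)
  fin_cases t <;>
    simp only [show ∀ h, (⟨0, h⟩ : Fin 4) = 0 from fun _ => rfl,
      show ∀ h, (⟨1, h⟩ : Fin 4) = 1 from fun _ => rfl,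
      show ∀ h, (⟨2, h⟩ : Fin 4) = 2 from fun _ => rfl,
      show ∀ h, (⟨3, h⟩ : Fin 4) = 3 from fun _ => rfl] at hk ⊢ <;>
    first
      | (rw [show ∀ a b c, ZclauseType 0 a b c = Zclause1 a b c from fun _ _ _ => rfl,
           fact1 _ _ _ (sq _) (sq _), e0, e1, e2]
         fin_cases k <;>
           simp only [show ∀ h, (⟨0, h⟩ : Fin 3) = 0 from fun _ => rfl,
             show ∀ h, (⟨1, h⟩ : Fin 3) = 1 from fun _ => rfl,
             show ∀ h, (⟨2, h⟩ : Fin 3) = 2 from fun _ => rfl] at hk <;>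
           norm_num at hk <;> rw [hk] <;> norm_num)
      | (rw [show ∀ a b c, ZclauseType 1 a b c = Zclause2 a b c from fun _ _ _ => rfl,
           fact2 _ _ _ (sq _) (sq _), e0, e1, e2]
         fin_cases k <;>
           simp only [show ∀ h, (⟨0, h⟩ : Fin 3) = 0 from fun _ => rfl,
             show ∀ h, (⟨1, h⟩ : Fin 3) = 1 from fun _ => rfl,
             show ∀ h, (⟨2, h⟩ : Fin 3) = 2 from fun _ => rfl] at hk <;>
           norm_num at hk <;> rw [hk] <;> norm_num)
      | (rw [show ∀ a b c, ZclauseType 2 a b c = Zclause3 a b c from fun _ _ _ => rfl,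
           fact3 _ _ _ (sq _) (sq _), e0, e1, e2]
         fin_cases k <;>
           simp only [show ∀ h, (⟨0, h⟩ : Fin 3) = 0 from fun _ => rfl,
             show ∀ h, (⟨1, h⟩ : Fin 3) = 1 from fun _ => rfl,
             show ∀ h, (⟨2, h⟩ : Fin 3) = 2 from fun _ => rfl] at hk <;>
           norm_num at hk <;> rw [hk] <;> norm_num)
      | (rw [show ∀ a b c, ZclauseType 3 a b c = Zclause4 a b c from fun _ _ _ => rfl,
           fact4 _ _ _ (sq _) (sq _), e0, e1, e2]
         fin_cases k <;>
           simp only [show ∀ h, (⟨0, h⟩ : Fin 3) = 0 from fun _ => rfl,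
             show ∀ h, (⟨1, h⟩ : Fin 3) = 1 from fun _ => rfl,
             show ∀ h, (⟨2, h⟩ : Fin 3) = 2 from fun _ => rfl] at hk <;>
           norm_num at hk <;> rw [hk] <;> norm_num)

/-- if the instance is satisfiable, the dual function is nonpositive:
for every φ_λ, inf_φ L_T(φ, φ_λ) ≤ 0. -/
theorem LagT_dual_function_nonpos (N M : ℕ) (C : Fin M → Clause3 N)
    (hsat : Satisfiable C) :
    ∀ lam : Fin M → ℝ,
      sInf {y : ℝ | ∃ phi : Fin N → ℝ, y = LagT C phi lam} ≤ 0 := by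
  intro lam
  obtain ⟨S, hS, hsat⟩ := hsat
  set phi : Fin N → ℝ := fun j => if S j = 1 then (0:ℝ) else Real.pi with hphi
  have hz : LagT C phi lam = 0 := by
    unfold LagT
    apply Finset.sum_eq_zero
    intro m _
    have := Zm_eq_zero (C m) S hS (hsat m)
    rw [← hphi] at this
    rw [this]
    simp
  have hmem : (0:ℝ) ∈ {y : ℝ | ∃ phi : Fin N → ℝ, y = LagT C phi lam} := ⟨phi, hz.symm⟩
  by_cases hb : BddBelow {y : ℝ | ∃ phi : Fin N → ℝ, y = LagT C phi lam}
  · exact csInf_le hb hmem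
  · rw [Real.sInf_of_not_bddBelow hb]
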